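/- With the Jackson damping coefficients ρ_j = [(m+2-j)cos(jπ/(m+2)) + sin(jπ/(m+2))cot(π/(m+2))]/(m+2) for j = 0,...,m, one has ρ_0 = 1 and 1 - ρ_1 ≤ π²/(2(m+2)²) for all m ≥ 1. -/

import Mathlib

open Real

/-- For the Jackson damping coefficients
`ρ_j = [(m+2-j)cos(jπ/(m+2)) + sin(jπ/(m+2))cot(π/(m+2))]/(m+2)`, one has `ρ_0 = 1` and
`1 - ρ_1 ≤ π²/(2(m+2)²)` for all `m ≥ 1`. -/
theorem jackson_coefficients_bounds (m : ℕ) (hm : 1 ≤ m) (ρ : ℕ → ℝ)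
    (hρ : ∀ j ≤ m, ρ j = (((m : ℝ) + 2 - j) * Real.cos (j * Real.pi / (m + 2))
        + Real.sin (j * Real.pi / (m + 2))
          * (Real.cos (Real.pi / (m + 2)) / Real.sin (Real.pi / (m + 2)))) / ((m : ℝ) + 2)) :
    ρ 0 = 1 ∧ 1 - ρ 1 ≤ Real.pi ^ 2 / (2 * ((m : ℝ) + 2) ^ 2) := by
  have hm2 : (0 : ℝ) < (m : ℝ) + 2 := by positivity
  have hθpos : 0 < Real.pi / ((m : ℝ) + 2) := div_pos Real.pi_pos hm2
  have hθlt : Real.pi / ((m : ℝ) + 2) < Real.pi := by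
    rw [div_lt_iff₀ hm2]
    nlinarith [Real.pi_pos]
  have hsin : Real.sin (Real.pi / ((m : ℝ) + 2)) ≠ 0 :=
    ne_of_gt (Real.sin_pos_of_pos_of_lt_pi hθpos hθlt)
  constructor
  · rw [hρ 0 (Nat.zero_le m)]
    simp [Real.cos_zero, Real.sin_zero]
    exact ne_of_gt hm2
  · rw [hρ 1 hm]
    have h1 : ((1 : ℕ) : ℝ) * Real.pi / ((m : ℝ) + 2) = Real.pi / ((m : ℝ) + 2) := by
      push_cast; ring
    rw [h1]
    have hρ1 : (((m : ℝ) + 2 - (1 : ℕ)) * Real.cos (Real.pi / (m + 2))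
        + Real.sin (Real.pi / (m + 2))
          * (Real.cos (Real.pi / (m + 2)) / Real.sin (Real.pi / (m + 2)))) / ((m : ℝ) + 2)
        = Real.cos (Real.pi / ((m : ℝ) + 2)) := by
      field_simp
      ring
    rw [hρ1]
    have := Real.one_sub_sq_div_two_le_cos (x := Real.pi / ((m : ℝ) + 2))
    have heq : (Real.pi / ((m : ℝ) + 2)) ^ 2 / 2 = Real.pi ^ 2 / (2 * ((m : ℝ) + 2) ^ 2) := by
      field_simp
    linarith [heq ▸ this]
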